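/- Let σ(u,v) = (u cos v, u sin v, u) for u < 0 and v ∈ (0, 2π) (the lower part of the cone x² + y² = t²). Then: (i) ∂(x,y)(u,v) = u ≠ 0 and the horizontal normal components are N₁ = −u(cos v − 2u sin v) and N₂ = −u(sin v + 2u cos v), with N₁² + N₂² = u²(1 + 4u²) > 0, so no point is characteristic; (ii) the unit horizontal normal is (ν₁, ν₂) = ((cos v − 2u sin v)/√(1+4u²), (sin v + 2u cos v)/√(1+4u²)); (iii) the horizontal mean curvature is H^h = (∂(ν₁, y) + ∂(x, ν₂))/∂(x,y) = 1/(u(1+4u²)^{3/2}). In particular the cone has empty characteristic locus but nonzero, nonconstant horizontal mean curvature, so it is not a straight ruled surface in the Heisenberg group. -/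

import Mathlib

/-- Partial derivative in the first variable. -/
noncomputable def pu (f : ℝ × ℝ → ℝ) (p : ℝ × ℝ) : ℝ := deriv (fun u => f (u, p.2)) p.1

/-- Partial derivative in the second variable. -/
noncomputable def pv (f : ℝ × ℝ → ℝ) (p : ℝ × ℝ) : ℝ := deriv (fun v => f (p.1, v)) p.2

/-- Jacobian ∂(f,g) = f_u g_v − f_v g_u. -/
noncomputable def jac (f g : ℝ × ℝ → ℝ) (p : ℝ × ℝ) : ℝ :=
  pu f p * pv g p - pv f p * pu g p

/-- First component of the horizontal normal: N₁ = ∂(y,t) + 2y ∂(x,y). -/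
noncomputable def N1 (x y t : ℝ × ℝ → ℝ) (p : ℝ × ℝ) : ℝ :=
  jac y t p + 2 * y p * jac x y p

/-- Second component of the horizontal normal: N₂ = ∂(t,x) − 2x ∂(x,y). -/
noncomputable def N2 (x y t : ℝ × ℝ → ℝ) (p : ℝ × ℝ) : ℝ :=
  jac t x p - 2 * x p * jac x y p

/-- First component of the unit horizontal normal. -/
noncomputable def nu1 (x y t : ℝ × ℝ → ℝ) (p : ℝ × ℝ) : ℝ :=
  N1 x y t p / Real.sqrt (N1 x y t p ^ 2 + N2 x y t p ^ 2)

/-- Second component of the unit horizontal normal. -/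
noncomputable def nu2 (x y t : ℝ × ℝ → ℝ) (p : ℝ × ℝ) : ℝ :=
  N2 x y t p / Real.sqrt (N1 x y t p ^ 2 + N2 x y t p ^ 2)

/-- The lower cone patch σ(u,v) = (u cos v, u sin v, u): first component. -/
noncomputable def coneX (p : ℝ × ℝ) : ℝ := p.1 * Real.cos p.2

/-- The lower cone patch: second component. -/
noncomputable def coneY (p : ℝ × ℝ) : ℝ := p.1 * Real.sin p.2

/-- The lower cone patch: third component. -/
def coneT (p : ℝ × ℝ) : ℝ := p.1

set_option linter.unnecessarySimpa false

lemma pu_coneX (p : ℝ × ℝ) : pu coneX p = Real.cos p.2 := by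
  have : HasDerivAt (fun u : ℝ => u * Real.cos p.2) (Real.cos p.2) p.1 := by
    simpa using (hasDerivAt_id p.1).mul_const (Real.cos p.2)
  simpa [pu, coneX] using this.deriv

lemma pv_coneX (p : ℝ × ℝ) : pv coneX p = -(p.1 * Real.sin p.2) := by
  have : HasDerivAt (fun v : ℝ => p.1 * Real.cos v) (p.1 * -Real.sin p.2) p.2 :=
    (Real.hasDerivAt_cos p.2).const_mul p.1
  simpa [pv, coneX] using this.deriv

lemma pu_coneY (p : ℝ × ℝ) : pu coneY p = Real.sin p.2 := by
  have : HasDerivAt (fun u : ℝ => u * Real.sin p.2) (Real.sin p.2) p.1 := by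
    simpa using (hasDerivAt_id p.1).mul_const (Real.sin p.2)
  simpa [pu, coneY] using this.deriv

lemma pv_coneY (p : ℝ × ℝ) : pv coneY p = p.1 * Real.cos p.2 := by
  have : HasDerivAt (fun v : ℝ => p.1 * Real.sin v) (p.1 * Real.cos p.2) p.2 :=
    (Real.hasDerivAt_sin p.2).const_mul p.1
  simpa [pv, coneY] using this.deriv

lemma pu_coneT (p : ℝ × ℝ) : pu coneT p = 1 := by simp [pu, coneT]
lemma pv_coneT (p : ℝ × ℝ) : pv coneT p = 0 := by simp [pv, coneT]

lemma jacXY (p : ℝ × ℝ) : jac coneX coneY p = p.1 := by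
  have h := Real.sin_sq_add_cos_sq p.2
  simp only [jac, pu_coneX, pv_coneY, pv_coneX, pu_coneY]
  linear_combination p.1 * h

lemma N1_eq (p : ℝ × ℝ) :
    N1 coneX coneY coneT p = -p.1 * (Real.cos p.2 - 2 * p.1 * Real.sin p.2) := by
  simp only [N1, jac, pu_coneY, pv_coneT, pv_coneY, pu_coneT, pu_coneX, pv_coneX, coneY]
  linear_combination (2 * p.1 ^ 2 * Real.sin p.2) * Real.sin_sq_add_cos_sq p.2

lemma N2_eq (p : ℝ × ℝ) :
    N2 coneX coneY coneT p = -p.1 * (Real.sin p.2 + 2 * p.1 * Real.cos p.2) := by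
  simp only [N2, jac, pu_coneT, pv_coneX, pv_coneT, pu_coneX, pu_coneY, pv_coneY, coneX]
  linear_combination (-2 * p.1 ^ 2 * Real.cos p.2) * Real.sin_sq_add_cos_sq p.2

lemma Nsq_eq (p : ℝ × ℝ) :
    N1 coneX coneY coneT p ^ 2 + N2 coneX coneY coneT p ^ 2
      = p.1 ^ 2 * (1 + 4 * p.1 ^ 2) := by
  rw [N1_eq, N2_eq]
  have h := Real.sin_sq_add_cos_sq p.2
  nlinarith [h]

lemma sqrtN_eq (p : ℝ × ℝ) (hp : p.1 < 0) :
    Real.sqrt (N1 coneX coneY coneT p ^ 2 + N2 coneX coneY coneT p ^ 2)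
      = -p.1 * Real.sqrt (1 + 4 * p.1 ^ 2) := by
  rw [Nsq_eq, Real.sqrt_mul (sq_nonneg _), Real.sqrt_sq_eq_abs, abs_of_neg hp]

lemma nu1_eq (p : ℝ × ℝ) (hp : p.1 < 0) :
    nu1 coneX coneY coneT p
      = (Real.cos p.2 - 2 * p.1 * Real.sin p.2) / Real.sqrt (1 + 4 * p.1 ^ 2) := by
  rw [nu1, sqrtN_eq p hp, N1_eq]
  rw [mul_comm (-p.1), mul_comm (-p.1)]
  exact mul_div_mul_right _ _ (by linarith)

lemma nu2_eq (p : ℝ × ℝ) (hp : p.1 < 0) :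
    nu2 coneX coneY coneT p
      = (Real.sin p.2 + 2 * p.1 * Real.cos p.2) / Real.sqrt (1 + 4 * p.1 ^ 2) := by
  rw [nu2, sqrtN_eq p hp, N2_eq]
  rw [mul_comm (-p.1), mul_comm (-p.1)]
  exact mul_div_mul_right _ _ (by linarith)

lemma hF1u (v u : ℝ) : HasDerivAt (fun x : ℝ => (Real.cos v - 2*x*Real.sin v) / Real.sqrt (1+4*x^2))
    ((-(2*Real.sin v) * Real.sqrt (1+4*u^2) - (Real.cos v - 2*u*Real.sin v) * (8*u/(2*Real.sqrt (1+4*u^2)))) / Real.sqrt (1+4*u^2)^2) u := by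
  have hpos : (0:ℝ) < 1+4*u^2 := by positivity
  have hnum : HasDerivAt (fun x : ℝ => Real.cos v - 2*x*Real.sin v) (-(2*Real.sin v)) u := by
    have := ((hasDerivAt_id u).const_mul (2:ℝ)).mul_const (Real.sin v)
    simpa using this.const_sub (Real.cos v)
  have hin : HasDerivAt (fun x : ℝ => 1 + 4*x^2) (8*u) u := by
    have := (hasDerivAt_pow 2 u).const_mul (4:ℝ)
    have h := this.const_add (1:ℝ)
    norm_num at h
    have e : (8:ℝ)*u = 4*(2*u) := by ring
    rw [e]; exact h.const_add 1
  have hs := hin.sqrt hpos.ne'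
  exact hnum.div hs (Real.sqrt_pos.mpr hpos).ne'

lemma hF2u (v u : ℝ) : HasDerivAt (fun x : ℝ => (Real.sin v + 2*x*Real.cos v) / Real.sqrt (1+4*x^2))
    (((2*Real.cos v) * Real.sqrt (1+4*u^2) - (Real.sin v + 2*u*Real.cos v) * (8*u/(2*Real.sqrt (1+4*u^2)))) / Real.sqrt (1+4*u^2)^2) u := by
  have hpos : (0:ℝ) < 1+4*u^2 := by positivity
  have hnum : HasDerivAt (fun x : ℝ => Real.sin v + 2*x*Real.cos v) (2*Real.cos v) u := by
    have := ((hasDerivAt_id u).const_mul (2:ℝ)).mul_const (Real.cos v)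
    simpa using this.const_add (Real.sin v)
  have hin : HasDerivAt (fun x : ℝ => 1 + 4*x^2) (8*u) u := by
    have := (hasDerivAt_pow 2 u).const_mul (4:ℝ)
    have h := this.const_add (1:ℝ)
    norm_num at h
    have e : (8:ℝ)*u = 4*(2*u) := by ring
    rw [e]; exact h.const_add 1
  have hs := hin.sqrt hpos.ne'
  exact hnum.div hs (Real.sqrt_pos.mpr hpos).ne'

lemma alg1 (s c u R : ℝ) (hR : 0 < R) (h2 : R^2 = 1+4*u^2) :
    ((-(2*s)) * R - (c - 2*u*s) * (8*u/(2*R))) / R^2 = (-2*s - 4*u*c)/R^3 := by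
  field_simp
  ring_nf
  linear_combination (-4*s) * h2

lemma alg2 (s c u R : ℝ) (hR : 0 < R) (h2 : R^2 = 1+4*u^2) :
    ((2*c) * R - (s + 2*u*c) * (8*u/(2*R))) / R^2 = (2*c - 4*u*s)/R^3 := by
  field_simp
  ring_nf
  linear_combination (4*c) * h2

lemma pu_nu1 (p : ℝ × ℝ) (hp : p.1 < 0) :
    pu (nu1 coneX coneY coneT) p
      = (-2*Real.sin p.2 - 4*p.1*Real.cos p.2) / Real.sqrt (1+4*p.1^2)^3 := by
  have heq : (fun u => nu1 coneX coneY coneT (u, p.2)) =ᶠ[nhds p.1]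
      (fun u => (Real.cos p.2 - 2*u*Real.sin p.2) / Real.sqrt (1+4*u^2)) := by
    filter_upwards [Iio_mem_nhds hp] with u hu
    simpa using nu1_eq (u, p.2) hu
  have hpos : (0:ℝ) < 1+4*p.1^2 := by positivity
  rw [pu, heq.deriv_eq, (hF1u p.2 p.1).deriv]
  exact alg1 _ _ _ _ (Real.sqrt_pos.mpr hpos) (Real.sq_sqrt hpos.le)

lemma pu_nu2 (p : ℝ × ℝ) (hp : p.1 < 0) :
    pu (nu2 coneX coneY coneT) p
      = (2*Real.cos p.2 - 4*p.1*Real.sin p.2) / Real.sqrt (1+4*p.1^2)^3 := by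
  have heq : (fun u => nu2 coneX coneY coneT (u, p.2)) =ᶠ[nhds p.1]
      (fun u => (Real.sin p.2 + 2*u*Real.cos p.2) / Real.sqrt (1+4*u^2)) := by
    filter_upwards [Iio_mem_nhds hp] with u hu
    simpa using nu2_eq (u, p.2) hu
  have hpos : (0:ℝ) < 1+4*p.1^2 := by positivity
  rw [pu, heq.deriv_eq, (hF2u p.2 p.1).deriv]
  exact alg2 _ _ _ _ (Real.sqrt_pos.mpr hpos) (Real.sq_sqrt hpos.le)

lemma pv_nu1 (p : ℝ × ℝ) (hp : p.1 < 0) :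
    pv (nu1 coneX coneY coneT) p
      = (-Real.sin p.2 - 2*p.1*Real.cos p.2) / Real.sqrt (1+4*p.1^2) := by
  have heq : (fun v => nu1 coneX coneY coneT (p.1, v))
      = fun v => (Real.cos v - 2*p.1*Real.sin v) / Real.sqrt (1+4*p.1^2) := by
    funext v; simpa using nu1_eq (p.1, v) hp
  rw [pv, heq]
  have h : HasDerivAt (fun v : ℝ => Real.cos v - 2*p.1*Real.sin v)
      (-Real.sin p.2 - 2*p.1*Real.cos p.2) p.2 := by
    have := (Real.hasDerivAt_cos p.2).sub (((Real.hasDerivAt_sin p.2).const_mul (2*p.1)))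
    refine this.congr_deriv ?_
    try ring
  simpa using (h.div_const (Real.sqrt (1+4*p.1^2))).deriv

lemma pv_nu2 (p : ℝ × ℝ) (hp : p.1 < 0) :
    pv (nu2 coneX coneY coneT) p
      = (Real.cos p.2 - 2*p.1*Real.sin p.2) / Real.sqrt (1+4*p.1^2) := by
  have heq : (fun v => nu2 coneX coneY coneT (p.1, v))
      = fun v => (Real.sin v + 2*p.1*Real.cos v) / Real.sqrt (1+4*p.1^2) := by
    funext v; simpa using nu2_eq (p.1, v) hp
  rw [pv, heq]
  have h : HasDerivAt (fun v : ℝ => Real.sin v + 2*p.1*Real.cos v)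
      (Real.cos p.2 - 2*p.1*Real.sin p.2) p.2 := by
    have := (Real.hasDerivAt_sin p.2).add (((Real.hasDerivAt_cos p.2).const_mul (2*p.1)))
    refine this.congr_deriv ?_
    try ring
  simpa using (h.div_const (Real.sqrt (1+4*p.1^2))).deriv

lemma Hfinal (p : ℝ × ℝ) (hp : p.1 < 0) :
    (jac (nu1 coneX coneY coneT) coneY p + jac coneX (nu2 coneX coneY coneT) p)
        / jac coneX coneY p
      = 1 / (p.1 * Real.sqrt (1 + 4 * p.1 ^ 2) ^ 3) := by
  have hpos : (0:ℝ) < 1+4*p.1^2 := by positivity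
  have hR := Real.sqrt_pos.mpr hpos
  have h2 : Real.sqrt (1+4*p.1^2)^2 = 1+4*p.1^2 := Real.sq_sqrt hpos.le
  have hpy := Real.sin_sq_add_cos_sq p.2
  have hu : p.1 ≠ 0 := hp.ne
  rw [jac, jac, jacXY, pu_nu1 p hp, pv_nu1 p hp, pu_nu2 p hp, pv_nu2 p hp,
    pu_coneX, pv_coneX, pu_coneY, pv_coneY]
  have he : (1 : ℝ) + 4 * p.1 ^ 2 = 1 + 4*p.1^2 := by ring
  rw [he]
  set R := Real.sqrt (1+4*p.1^2) with hRdef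
  set s := Real.sin p.2
  set c := Real.cos p.2
  field_simp
  ring_nf
  linear_combination (R^2 - 4*p.1^2) * hpy + h2

/-- for the lower part of the cone x² + y² = t², parametrised by
σ(u,v) = (u cos v, u sin v, u) with u < 0, v ∈ (0,2π): ∂(x,y) = u ≠ 0,
N₁ = −u(cos v − 2u sin v), N₂ = −u(sin v + 2u cos v), N₁² + N₂² = u²(1+4u²) > 0 (no
characteristic points), the unit horizontal normal is
((cos v − 2u sin v)/√(1+4u²), (sin v + 2u cos v)/√(1+4u²)), and the horizontal mean
curvature is H^h = 1/(u(1+4u²)^{3/2}): nonzero and nonconstant, so the cone is not a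
straight ruled surface. -/
theorem stmt_18 :
    ∀ p : ℝ × ℝ, p.1 < 0 → p.2 ∈ Set.Ioo 0 (2 * Real.pi) →
      jac coneX coneY p = p.1 ∧ p.1 ≠ 0 ∧
      N1 coneX coneY coneT p = -p.1 * (Real.cos p.2 - 2 * p.1 * Real.sin p.2) ∧
      N2 coneX coneY coneT p = -p.1 * (Real.sin p.2 + 2 * p.1 * Real.cos p.2) ∧
      N1 coneX coneY coneT p ^ 2 + N2 coneX coneY coneT p ^ 2
        = p.1 ^ 2 * (1 + 4 * p.1 ^ 2) ∧
      ¬(N1 coneX coneY coneT p = 0 ∧ N2 coneX coneY coneT p = 0) ∧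
      nu1 coneX coneY coneT p
        = (Real.cos p.2 - 2 * p.1 * Real.sin p.2) / Real.sqrt (1 + 4 * p.1 ^ 2) ∧
      nu2 coneX coneY coneT p
        = (Real.sin p.2 + 2 * p.1 * Real.cos p.2) / Real.sqrt (1 + 4 * p.1 ^ 2) ∧
      (jac (nu1 coneX coneY coneT) coneY p + jac coneX (nu2 coneX coneY coneT) p)
          / jac coneX coneY p
        = 1 / (p.1 * Real.sqrt (1 + 4 * p.1 ^ 2) ^ 3) := by
  intro p hp _hv
  refine ⟨jacXY p, hp.ne, N1_eq p, N2_eq p, Nsq_eq p, ?_, nu1_eq p hp, nu2_eq p hp,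
    Hfinal p hp⟩
  rintro ⟨h1, h2⟩
  have h := Nsq_eq p
  rw [h1, h2] at h
  nlinarith [sq_nonneg p.1, h, hp]
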